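/- Let n, m be positive integers with 1 ≤ m ≤ n/3. For every tree T with n vertices and every vertex t ∈ V(T), there exist two subtrees T₁ and T₂ which divide T such that t ∈ V(T₁) and m ≤ |T₂| ≤ 3m. -/

import Mathlib

/-- Two subtrees (connected subgraphs) `A` and `B` *divide* the tree `S` if together
they cover `S` and they intersect in exactly one vertex. -/
def Divides {V : Type*} {S : SimpleGraph V} (A B : S.Subgraph) : Prop :=
  A.Connected ∧ B.Connected ∧ A ⊔ B = ⊤ ∧ ∃ v, A.verts ∩ B.verts = {v}

namespace DividesAux

open SimpleGraph

variable {V : Type*} {T : SimpleGraph V}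

/-- The subgraph with vertex set `s` and all edges of `T` inside `s`. -/
def hangSub (T : SimpleGraph V) (s : Set V) : T.Subgraph where
  verts := s
  Adj a b := a ∈ s ∧ b ∈ s ∧ T.Adj a b
  adj_sub h := h.2.2
  edge_vert h := h.1
  symm := ⟨fun a b h => ⟨h.2.1, h.1, h.2.2.symm⟩⟩

/-- All boundary edges of `s` leave from `v`. -/
def Bdry (T : SimpleGraph V) (s : Set V) (v : V) : Prop :=
  ∀ ⦃a b⦄, T.Adj a b → a ∈ s → b ∉ s → a = v

lemma key (hc : T.Connected) {s : Set V} {v : V} (hv : v ∈ s) (hb : Bdry T s v) :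
    (hangSub T s).Connected := by
  rw [SimpleGraph.Subgraph.connected_iff]
  have main : ∀ (u w : V) (p : T.Walk w u), u = v → ∀ hw : w ∈ s,
      (hangSub T s).coe.Reachable ⟨w, hw⟩ ⟨v, hv⟩ := by
    intro u w p
    induction p with
    | nil => rintro rfl hw; exact Reachable.refl _
    | @cons a x _ h q ih =>
      intro hu hw
      by_cases hx : x ∈ s
      · exact (SimpleGraph.Adj.reachable
          (show (hangSub T s).coe.Adj ⟨a, hw⟩ ⟨x, hx⟩ from ⟨hw, hx, h⟩)).trans (ih hu hx)
      · have hav := hb h hw hx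
        subst hav
        exact Reachable.refl _
  constructor
  · rw [SimpleGraph.Subgraph.preconnected_iff]
    intro x y
    obtain ⟨x, hx⟩ := x
    obtain ⟨y, hy⟩ := y
    obtain ⟨px⟩ := hc.preconnected x v
    obtain ⟨py⟩ := hc.preconnected y v
    exact (main v x px rfl hx).trans (main v y py rfl hy).symm
  · exact ⟨v, hv⟩

/-- A good pair: `v ∈ s`, all boundary edges of `s` leave from `v`, and `t ∉ s \ {v}`. -/
def Good (T : SimpleGraph V) (t : V) (s : Set V) (v : V) : Prop :=
  v ∈ s ∧ Bdry T s v ∧ t ∉ s \ {v}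

/-- From a good pair, assemble the dividing subgraphs. -/
lemma assemble (hT : T.IsTree) {t : V} {s : Set V} {v : V} (h : Good T t s v) :
    ∃ A B : T.Subgraph, Divides A B ∧ t ∈ A.verts ∧ B.verts = s := by
  obtain ⟨hv, hb, ht⟩ := h
  refine ⟨hangSub T (sᶜ ∪ {v}), hangSub T s, ⟨?_, ?_, ?_, v, ?_⟩, ?_, rfl⟩
  · -- A connected
    refine key hT.isConnected (Or.inr rfl) ?_
    intro a b hab ha hbn
    simp only [Set.mem_union, Set.mem_compl_iff, Set.mem_singleton_iff, not_or, not_not] at hbn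
    obtain ⟨hbs, hbv⟩ := hbn
    rcases ha with ha | ha
    · exact absurd (hb hab.symm hbs ha) hbv
    · exact ha
  · -- B connected
    exact key hT.isConnected hv hb
  · -- sup = top
    ext a b
    · simp only [Subgraph.verts_sup, hangSub, Set.mem_union, Subgraph.verts_top, Set.mem_univ,
        iff_true, Set.mem_compl_iff, Set.mem_singleton_iff]
      tauto
    · simp only [Subgraph.sup_adj, hangSub, Subgraph.top_adj]
      constructor
      · rintro (⟨_, _, h⟩ | ⟨_, _, h⟩) <;> exact h
      · intro hab
        by_cases ha : a ∈ s <;> by_cases hbs : b ∈ s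
        · exact Or.inr ⟨ha, hbs, hab⟩
        · exact Or.inl ⟨Or.inr (hb hab ha hbs), Or.inl hbs, hab⟩
        · exact Or.inl ⟨Or.inl ha, Or.inr (hb hab.symm hbs ha), hab⟩
        · exact Or.inl ⟨Or.inl ha, Or.inl hbs, hab⟩
  · -- intersection
    ext x
    simp only [hangSub, Set.mem_inter_iff, Set.mem_union, Set.mem_compl_iff,
      Set.mem_singleton_iff]
    constructor
    · rintro ⟨hx | hx, hxs⟩
      · exact absurd hxs hx
      · exact hx
    · rintro rfl; exact ⟨Or.inr rfl, hv⟩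
  · -- t ∈ A
    simp only [hangSub, Set.mem_union, Set.mem_compl_iff, Set.mem_singleton_iff]
    by_cases hts : t ∈ s
    · right
      by_contra htv
      exact ht ⟨hts, htv⟩
    · exact Or.inl hts

/-- The connected component of `w` inside `s₀`, described by walks staying in `s₀`. -/
def Comp (T : SimpleGraph V) (s₀ : Set V) (w : V) : Set V :=
  {x | ∃ p : T.Walk x w, ∀ z ∈ p.support, z ∈ s₀}

lemma comp_subset {s₀ : Set V} {w : V} : Comp T s₀ w ⊆ s₀ := by
  rintro x ⟨p, hp⟩
  exact hp x p.start_mem_support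

lemma mem_comp_self {s₀ : Set V} {w : V} (hw : w ∈ s₀) : w ∈ Comp T s₀ w := by
  refine ⟨SimpleGraph.Walk.nil, ?_⟩
  intro z hz
  simp only [SimpleGraph.Walk.support_nil, List.mem_singleton] at hz
  rwa [hz]

lemma comp_closure {s₀ : Set V} {w x y : V} (hx : x ∈ Comp T s₀ w) (hadj : T.Adj y x)
    (hy : y ∈ s₀) : y ∈ Comp T s₀ w := by
  obtain ⟨p, hp⟩ := hx
  refine ⟨SimpleGraph.Walk.cons hadj p, ?_⟩
  intro z hz
  rw [SimpleGraph.Walk.support_cons, List.mem_cons] at hz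
  rcases hz with rfl | hz
  · exact hy
  · exact hp z hz

/-- If `a` and `a'` are both in the component of `w` inside `s₀`, with `v ∉ s₀`, and
both are adjacent to `v`, then acyclicity forces `a = a'`. -/
lemma comp_unique_attach (hT : T.IsTree) {s₀ : Set V} {w v a a' : V}
    (hvs : v ∉ s₀) (ha : a ∈ Comp T s₀ w) (ha' : a' ∈ Comp T s₀ w)
    (hav : T.Adj v a) (hav' : T.Adj v a') : a = a' := by
  classical
  obtain ⟨p, hp⟩ := ha
  obtain ⟨p', hp'⟩ := ha'
  set q : T.Walk a a' := p.append p'.reverse with hq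
  have hqs : ∀ z ∈ q.support, z ∈ s₀ := by
    intro z hz
    rw [hq, SimpleGraph.Walk.mem_support_append_iff] at hz
    rcases hz with hz | hz
    · exact hp z hz
    · rw [SimpleGraph.Walk.support_reverse, List.mem_reverse] at hz
      exact hp' z hz
  have hrs : ∀ z ∈ (q.toPath : T.Walk a a').support, z ∈ s₀ := fun z hz =>
    hqs z (SimpleGraph.Walk.support_toPath_subset q hz)
  have hvr : v ∉ (q.toPath : T.Walk a a').support := fun hmem => hvs (hrs v hmem)
  by_contra hne
  have hva' : v ≠ a' := fun hva => hvs (hva ▸ comp_subset ⟨p', hp'⟩)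
  have hP1 : (SimpleGraph.Walk.cons hav (q.toPath : T.Walk a a')).IsPath := by
    rw [SimpleGraph.Walk.cons_isPath_iff]
    exact ⟨q.toPath.property, hvr⟩
  have hP2 : (SimpleGraph.Walk.cons hav' SimpleGraph.Walk.nil).IsPath := by
    rw [SimpleGraph.Walk.cons_isPath_iff]
    constructor
    · exact SimpleGraph.Walk.IsPath.nil
    · simp only [SimpleGraph.Walk.support_nil, List.mem_singleton]
      exact hva'
  obtain ⟨P, _, hPu⟩ := hT.existsUnique_path v a'
  have he : SimpleGraph.Walk.cons hav (q.toPath : T.Walk a a') = SimpleGraph.Walk.cons hav' SimpleGraph.Walk.nil :=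
    (hPu _ hP1).trans (hPu _ hP2).symm
  have hlen : (SimpleGraph.Walk.cons hav (q.toPath : T.Walk a a')).length =
      (SimpleGraph.Walk.cons hav' SimpleGraph.Walk.nil).length := by rw [he]
  simp only [SimpleGraph.Walk.length_cons, SimpleGraph.Walk.length_nil,
    Nat.add_left_inj] at hlen
  exact hne (SimpleGraph.Walk.eq_of_length_eq_zero hlen)

/-- A walk staying inside `s₀` cannot leave a set `s''` whose boundary is only `v ∉ s₀`. -/
lemma walk_stay {s₀ s'' : Set V} {v : V} (hb : Bdry T s'' v) (hvs : v ∉ s₀) :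
    ∀ {x y : V} (p : T.Walk x y), (∀ z ∈ p.support, z ∈ s₀) → x ∈ s'' → y ∈ s'' := by
  intro x y p
  induction p with
  | nil => intro _ hx; exact hx
  | @cons a c _ h q ih =>
    intro hsup hx
    have hc : c ∈ s₀ := hsup c (by rw [SimpleGraph.Walk.support_cons]; exact List.mem_cons_of_mem _ q.start_mem_support)
    by_cases hcs : c ∈ s''
    · refine ih ?_ hcs
      intro z hz
      exact hsup z (by rw [SimpleGraph.Walk.support_cons]; exact List.mem_cons_of_mem _ hz)
    · have : a = v := hb h hx hcs
      have ha : a ∈ s₀ := hsup a (by rw [SimpleGraph.Walk.support_cons]; exact List.mem_cons_self)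
      exact absurd (this ▸ ha) hvs

variable [Finite V]

/-- The shrinking lemma: a good set of size `> 3m` yields a smaller good set of size `≥ m`. -/
lemma shrink (hT : T.IsTree) {m : ℕ} (hm : 1 ≤ m) {t : V} {s : Set V} {v : V}
    (hg : Good T t s v) (hs : 3 * m < s.ncard) :
    ∃ s' v', Good T t s' v' ∧ m ≤ s'.ncard ∧ s'.ncard < s.ncard := by
  classical
  obtain ⟨hv, hb, ht⟩ := hg
  set s₀ : Set V := s \ {v} with hs₀
  have hvs₀ : v ∉ s₀ := fun h => h.2 rfl
  have hs₀sub : s₀ ⊆ s := Set.diff_subset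
  have hcard_lt : ∀ C : Set V, C ⊆ s₀ → C.ncard < s.ncard := by
    intro C hC
    refine Set.ncard_lt_ncard ⟨hC.trans hs₀sub, fun hsub => ?_⟩ (Set.toFinite s)
    exact hvs₀ (hC (hsub hv))
  by_cases h1 : ∃ w ∈ s₀, m ≤ (Comp T s₀ w).ncard
  · -- Case 1: a big component; it is good hanging at its unique attachment vertex.
    obtain ⟨w, hw, hmw⟩ := h1
    set C : Set V := Comp T s₀ w with hC
    have hCs₀ : C ⊆ s₀ := comp_subset
    have hbC : ∀ ⦃a b⦄, T.Adj a b → a ∈ C → b ∉ C → b = v := by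
      intro a b hab ha hbn
      by_cases hbs₀ : b ∈ s₀
      · exact absurd (comp_closure ha hab.symm hbs₀) hbn
      · by_cases hbs : b ∈ s
        · by_contra hbv
          exact hbs₀ ⟨hbs, hbv⟩
        · exact absurd (hb hab (hs₀sub (hCs₀ ha)) hbs) (fun h => hvs₀ (h ▸ hCs₀ ha))
    by_cases h2 : ∃ u ∈ C, T.Adj u v
    · obtain ⟨u, huC, huv⟩ := h2
      refine ⟨C, u, ⟨huC, ?_, ?_⟩, hmw, hcard_lt C hCs₀⟩
      · intro a b hab ha hbn
        have hbv : b = v := hbC hab ha hbn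
        subst hbv
        exact comp_unique_attach hT hvs₀ ha huC hab.symm huv.symm
      · intro hmem
        exact ht ⟨hs₀sub (hCs₀ hmem.1), (hCs₀ hmem.1).2⟩
    · -- no attachment: boundary of C is empty
      have hCne : C.Nonempty := ⟨w, mem_comp_self hw⟩
      obtain ⟨u, huC⟩ := hCne
      refine ⟨C, u, ⟨huC, ?_, ?_⟩, hmw, hcard_lt C hCs₀⟩
      · intro a b hab ha hbn
        have hbv : b = v := hbC hab ha hbn
        exact absurd ⟨a, ha, hbv ▸ hab⟩ h2
      · intro hmem
        exact ht ⟨hs₀sub (hCs₀ hmem.1), (hCs₀ hmem.1).2⟩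
  · -- Case 2: all components are small; take a maximal good subset of size ≤ 2m - 1.
    push_neg at h1
    set P : ℕ → Prop := fun k => ∃ s'' : Set V,
      (v ∈ s'' ∧ s'' ⊆ s ∧ Bdry T s'' v ∧ s''.ncard ≤ 2 * m - 1) ∧ s''.ncard = k with hP
    have hP1 : P 1 := by
      refine ⟨{v}, ⟨rfl, Set.singleton_subset_iff.mpr hv, ?_, ?_⟩, Set.ncard_singleton v⟩
      · intro a b _ ha _; exact ha
      · rw [Set.ncard_singleton]; omega
    have h1le : 1 ≤ 2 * m - 1 := by omega
    set k : ℕ := Nat.findGreatest P (2 * m - 1) with hk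
    have hPk : P k := Nat.findGreatest_spec h1le hP1
    have hk1 : 1 ≤ k := Nat.le_findGreatest h1le hP1
    obtain ⟨s'', ⟨hvs'', hsub'', hb'', hcard''⟩, hkcard⟩ := hPk
    by_cases hkm : m ≤ k
    · refine ⟨s'', v, ⟨hvs'', hb'', ?_⟩, hkcard ▸ hkm, ?_⟩
      · intro hmem
        exact ht ⟨hsub'' hmem.1, hmem.2⟩
      · rw [hkcard]; omega
    · -- k < m : we can enlarge s'' by a disjoint component, contradiction with maximality.
      exfalso
      push_neg at hkm
      have hssne : (s \ s'').Nonempty := by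
        by_contra hem
        rw [Set.not_nonempty_iff_eq_empty, Set.diff_eq_empty] at hem
        have := Set.ncard_le_ncard hem (Set.toFinite s'')
        omega
      obtain ⟨w, hws, hws''⟩ := hssne
      have hwv : w ≠ v := fun h => hws'' (h ▸ hvs'')
      have hws₀ : w ∈ s₀ := ⟨hws, hwv⟩
      set C : Set V := Comp T s₀ w with hC
      have hCs₀ : C ⊆ s₀ := comp_subset
      have hCdisj : Disjoint s'' C := by
        rw [Set.disjoint_right]
        rintro x ⟨p, hp⟩ hxs''
        exact hws'' (walk_stay hb'' hvs₀ p hp hxs'')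
      have hCcard : C.ncard < m := h1 w hws₀
      have hCne : C.Nonempty := ⟨w, mem_comp_self hws₀⟩
      have hCpos : 1 ≤ C.ncard := by
        rw [Nat.one_le_iff_ne_zero]
        intro h0
        rw [Set.ncard_eq_zero (Set.toFinite C)] at h0
        exact Set.not_nonempty_empty (h0 ▸ hCne)
      have hunion : (s'' ∪ C).ncard = s''.ncard + C.ncard :=
        Set.ncard_union_eq hCdisj (Set.toFinite _) (Set.toFinite _)
      have hPnew : P (s'' ∪ C).ncard := by
        refine ⟨s'' ∪ C, ⟨Or.inl hvs'', Set.union_subset hsub'' (hCs₀.trans hs₀sub), ?_, ?_⟩, rfl⟩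
        · intro a b hab ha hbn
          rcases ha with ha | ha
          · refine hb'' hab ha (fun hbs'' => hbn (Or.inl hbs''))
          · exfalso
            by_cases hbs₀ : b ∈ s₀
            · exact hbn (Or.inr (comp_closure ha hab.symm hbs₀))
            · by_cases hbs : b ∈ s
              · have hbv : b = v := by
                  by_contra hbv
                  exact hbs₀ ⟨hbs, hbv⟩
                exact hbn (Or.inl (hbv ▸ hvs''))
              · exact hvs₀ ((hb hab (hs₀sub (hCs₀ ha)) hbs) ▸ hCs₀ ha)
        · omega
      have hgt : k < (s'' ∪ C).ncard := by omega
      have hle : (s'' ∪ C).ncard ≤ 2 * m - 1 := by omega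
      exact Nat.findGreatest_is_greatest hgt hle hPnew

end DividesAux

/-- Let `n, m` be positive integers with `1 ≤ m ≤ n/3`.  For every tree `T` with `n`
vertices and every vertex `t` of `T`, there exist two subtrees `T₁` and `T₂` which
divide `T` such that `t ∈ V(T₁)` and `m ≤ |T₂| ≤ 3m`. -/
theorem statement_7 (n m : ℕ) (hm : 1 ≤ m) (hmn : 3 * m ≤ n)
    (T : SimpleGraph (Fin n)) (hT : T.IsTree) (t : Fin n) :
    ∃ A B : T.Subgraph, Divides A B ∧ t ∈ A.verts ∧
      m ≤ B.verts.ncard ∧ B.verts.ncard ≤ 3 * m := by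
  classical
  open DividesAux in
  have hP : ∃ k, ∃ s : Set (Fin n), ∃ v, Good T t s v ∧ m ≤ s.ncard ∧ s.ncard = k := by
    refine ⟨n, Set.univ, t, ⟨trivial, ?_, ?_⟩, ?_, ?_⟩
    · intro a b _ _ hb; exact absurd trivial hb
    · intro hmem; exact hmem.2 rfl
    · rw [Set.ncard_univ, Nat.card_eq_fintype_card, Fintype.card_fin]; omega
    · rw [Set.ncard_univ, Nat.card_eq_fintype_card, Fintype.card_fin]
  obtain ⟨s, v, hgood, hms, hcard⟩ := Nat.find_spec hP
  have hmin := fun k (hk : k < Nat.find hP) => Nat.find_min hP hk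
  have hle : s.ncard ≤ 3 * m := by
    by_contra hgt
    push_neg at hgt
    obtain ⟨s', v', hgood', hms', hlt⟩ := DividesAux.shrink hT hm hgood hgt
    rw [hcard] at hlt
    exact hmin s'.ncard hlt ⟨s', v', hgood', hms', rfl⟩
  obtain ⟨A, B, hdiv, htA, hBverts⟩ := DividesAux.assemble hT hgood
  exact ⟨A, B, hdiv, htA, by rw [hBverts]; exact hms, by rw [hBverts]; exact hle⟩
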